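/- Let K be an algebraic number field of class number one and let ε be a unit of O_K. Fix n ∈ ℕ and write ε^n − 1 = u_n·v_n, where u_n is the squarefree part and v_n is the squarefull part of ε^n − 1. Then every prime element π of O_K dividing u_n is a non-Wieferich prime with respect to the base ε, i.e., ε^(N(π)−1) ≢ 1 (mod π²). -/
import Mathlib


open NumberField Filter

variable (K : Type*) [Field K] [NumberField K]

/-- The absolute value of the norm `N_{K/ℚ}` of an algebraic integer, as a natural number. -/
noncomputable def absNormElem (x : 𝓞 K) : ℕ := (Algebra.norm ℤ x).natAbs

set_option maxHeartbeats 1000000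
set_option synthInstance.maxHeartbeats 400000

/-- Let `K` be a number field of class number one and `ε` a unit of `𝓞 K`. Write
`ε^n − 1 = u * v` with `u` squarefree, `v` squarefull, and `u, v` coprime. Then every
prime divisor `π` of `u` is a non-Wieferich prime with respect to the base `ε`, i.e.
`ε^(N(π)−1) ≢ 1 (mod π²)`. -/
theorem nonWieferich_of_dvd_squarefree_part
    (hclass : NumberField.classNumber K = 1)
    (ε : (𝓞 K)ˣ) (n : ℕ) (u v : 𝓞 K)
    (huv : (ε : 𝓞 K) ^ n - 1 = u * v)
    (hu : Squarefree u)
    (hv : ∀ π : 𝓞 K, Prime π → π ∣ v → π ^ 2 ∣ v)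
    (hcop : IsCoprime u v)
    (π : 𝓞 K) (hπ : Prime π) (hπu : π ∣ u) :
    ¬ (π ^ 2 ∣ (ε : 𝓞 K) ^ (absNormElem K π - 1) - 1) := by
  intro hcontra
  have hπ0 : π ≠ 0 := hπ.ne_zero
  have hπv : ¬ π ∣ v := fun h' => hπ.not_unit (hcop.isUnit_of_dvd' hπu h')
  -- Step A : π² does not divide ε^n - 1
  have hA : ¬ π ^ 2 ∣ (ε : 𝓞 K) ^ n - 1 := by
    rw [huv]
    rintro ⟨t, ht⟩
    obtain ⟨u', rfl⟩ := hπu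
    rw [pow_two, mul_assoc, mul_assoc] at ht
    have h1 : u' * v = π * t := mul_left_cancel₀ hπ0 ht
    have h2 : π ∣ u' * v := ⟨t, h1⟩
    rcases hπ.dvd_mul.mp h2 with h3 | h3
    · exact hπ.not_unit (hu π (by rwa [mul_dvd_mul_iff_left hπ0]))
    · exact hπv h3
  -- residue field
  set I : Ideal (𝓞 K) := Ideal.span {π} with hIdef
  haveI hIprime : I.IsPrime := (Ideal.span_singleton_prime hπ0).mpr hπ
  have hIbot : I ≠ ⊥ := by simpa [hIdef, Ideal.span_singleton_eq_bot] using hπ0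
  haveI hImax : I.IsMaximal := Ideal.IsPrime.isMaximal hIprime hIbot
  letI : Field (𝓞 K ⧸ I) := Ideal.Quotient.field I
  have habs : Ideal.absNorm I = absNormElem K π := by
    simp [hIdef, absNormElem]
  have hnorm0 : Ideal.absNorm I ≠ 0 := by
    rw [habs]
    simpa [absNormElem, Int.natAbs_eq_zero] using
      (Algebra.norm_ne_zero_iff (R := ℤ)).mpr hπ0
  haveI : Finite (𝓞 K ⧸ I) := (Ideal.absNorm_ne_zero_iff I).mp hnorm0
  haveI : Fintype (𝓞 K ⧸ I) := Fintype.ofFinite _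
  -- cardinality
  set q : ℕ := absNormElem K π with hqdef
  have hcard : Fintype.card (𝓞 K ⧸ I) = q := by
    rw [← habs, Ideal.absNorm_apply, Submodule.cardQuot_apply, Nat.card_eq_fintype_card]
  -- divisibility vs. vanishing in the quotient
  have hdvd_iff : ∀ x : 𝓞 K, π ∣ x ↔ Ideal.Quotient.mk I x = 0 := fun x => by
    rw [Ideal.Quotient.eq_zero_iff_mem, hIdef, Ideal.mem_span_singleton]
  set a : 𝓞 K ⧸ I := Ideal.Quotient.mk I (ε : 𝓞 K) with hadef
  have ha0 : a ≠ 0 := by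
    intro h
    exact hπ.not_unit (isUnit_of_dvd_unit ((hdvd_iff _).mpr h) ε.isUnit)
  have hq2 : 2 ≤ q := hcard ▸ Fintype.one_lt_card
  have haq : a ^ (q - 1) = 1 := by
    rw [← hcard]; exact FiniteField.pow_card_sub_one_eq_one a ha0
  -- the order m of ε in the residue field
  set m : ℕ := orderOf a with hmdef
  have hfin : IsOfFinOrder a := isOfFinOrder_iff_pow_eq_one.mpr ⟨q - 1, by omega, haq⟩
  have hm0 : 0 < m := hfin.orderOf_pos
  have ham : a ^ m = 1 := pow_orderOf_eq_one a
  have hπn : π ∣ (ε : 𝓞 K) ^ n - 1 := huv ▸ dvd_mul_of_dvd_left hπu v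
  have han : a ^ n = 1 := by
    have := (hdvd_iff _).mp hπn
    rw [map_sub, map_pow, map_one, sub_eq_zero] at this
    exact this
  have hmn : m ∣ n := orderOf_dvd_of_pow_eq_one han
  have hmq : m ∣ q - 1 := orderOf_dvd_of_pow_eq_one haq
  -- Step B : π² does not divide ε^m - 1
  have hπm : π ∣ (ε : 𝓞 K) ^ m - 1 := by
    rw [hdvd_iff, map_sub, map_pow, map_one, sub_eq_zero]; exact ham
  have hB : ¬ π ^ 2 ∣ (ε : 𝓞 K) ^ m - 1 := by
    intro h
    obtain ⟨k, rfl⟩ := hmn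
    refine hA ?_
    have hfac : (∑ i ∈ Finset.range k, ((ε : 𝓞 K) ^ m) ^ i) * ((ε : 𝓞 K) ^ m - 1)
        = (ε : 𝓞 K) ^ (m * k) - 1 := by
      rw [geom_sum_mul, ← pow_mul]
    exact hfac ▸ Dvd.dvd.mul_left h _
  -- characteristic of the residue field
  set p : ℕ := ringChar (𝓞 K ⧸ I) with hpdef
  haveI : CharP (𝓞 K ⧸ I) p := ringChar.charP _
  have hpprime : p.Prime := CharP.char_is_prime (𝓞 K ⧸ I) p
  have hpq : p ∣ q := by
    rw [← hcard]
    exact (CharP.cast_eq_zero_iff (𝓞 K ⧸ I) p _).mp (Nat.cast_card_eq_zero _)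
  have hpq1 : ¬ p ∣ q - 1 := by
    intro h
    have h1 : p ∣ q - (q - 1) := Nat.dvd_sub hpq h
    rw [show q - (q - 1) = 1 by omega] at h1
    exact hpprime.ne_one (Nat.dvd_one.mp h1)
  -- Step C : π does not divide the geometric sum
  obtain ⟨k2, hk2⟩ := hmq
  have hpk2 : ¬ p ∣ k2 := fun h => hpq1 (hk2 ▸ Dvd.dvd.mul_left h m)
  set S : 𝓞 K := ∑ i ∈ Finset.range k2, ((ε : 𝓞 K) ^ m) ^ i with hSdef
  have hπS : ¬ π ∣ S := by
    rw [hdvd_iff]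
    have hmkS : Ideal.Quotient.mk I S = (k2 : 𝓞 K ⧸ I) := by
      rw [hSdef, map_sum]
      simp [map_pow, ← hadef, ham]
    rw [hmkS]
    exact fun h0 => hpk2 ((CharP.cast_eq_zero_iff _ p _).mp h0)
  -- Step D : conclude
  have hfac : S * ((ε : 𝓞 K) ^ m - 1) = (ε : 𝓞 K) ^ (q - 1) - 1 := by
    rw [hSdef, geom_sum_mul, ← pow_mul, ← hk2]
  obtain ⟨w', hw'⟩ := hπm
  have hw : π ^ 2 ∣ (ε : 𝓞 K) ^ m - 1 := by
    rw [← hfac, hw'] at hcontra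
    obtain ⟨t, ht⟩ := hcontra
    have h1 : π * (S * w') = π * (π * t) := by linear_combination ht
    have h2 : π ∣ S * w' := ⟨t, mul_left_cancel₀ hπ0 h1⟩
    have h3 : π ∣ w' := (hπ.dvd_mul.mp h2).resolve_left hπS
    rw [hw', pow_two]
    exact mul_dvd_mul_left π h3
  exact hB hw
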